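/- Every universal complex square matrix is nilpotent. -/

import Mathlib

open Matrix BigOperators

/-- Jacobian determinant of a map `f : ℂ^ι → ℂ^ι` at `x`. -/
noncomputable def jacDet {ι : Type*} [Fintype ι] [DecidableEq ι]
    (f : (ι → ℂ) → (ι → ℂ)) (x : ι → ℂ) : ℂ :=
  (LinearMap.toMatrix (Pi.basisFun ℂ ι) (Pi.basisFun ℂ ι)
    (fderiv ℂ f x).toLinearMap).det

/-- The map `x ↦ x + φ(Ax)`, with `φ` applied entrywise. -/
noncomputable def phiMap {ι : Type*} [Fintype ι] (A : Matrix ι ι ℂ) (φ : ℂ → ℂ)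
    (x : ι → ℂ) : ι → ℂ :=
  fun j => x j + φ (A.mulVec x j)

/-- Domain of definition of `x ↦ x + φ(Ax)` for `φ` defined on `Ω`. -/
def phiDom {ι : Type*} [Fintype ι] (A : Matrix ι ι ℂ) (Ω : Set ℂ) : Set (ι → ℂ) :=
  {x | ∀ j, A.mulVec x j ∈ Ω}

/-- `(A, φ)` is a good pair: the Jacobian of `x + φ(Ax)` is identically a nonzero constant. -/
def IsGoodPair {ι : Type*} [Fintype ι] [DecidableEq ι]
    (A : Matrix ι ι ℂ) (Ω : Set ℂ) (φ : ℂ → ℂ) : Prop :=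
  ∃ c : ℂ, c ≠ 0 ∧ ∀ x ∈ phiDom A Ω, jacDet (phiMap A φ) x = c

/-- A matrix is universal if it forms a good pair with every analytic function. -/
def IsUniversal {ι : Type*} [Fintype ι] [DecidableEq ι] (A : Matrix ι ι ℂ) : Prop :=
  ∀ (Ω : Set ℂ) (φ : ℂ → ℂ), IsOpen Ω → Ω.Nonempty → IsPreconnected Ω →
    AnalyticOn ℂ φ Ω → (phiDom A Ω).Nonempty → IsGoodPair A Ω φ

/-- The principal minor of `A` indexed by `I`. -/
noncomputable def principalMinor {ι : Type*} [DecidableEq ι] (A : Matrix ι ι ℂ)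
    (I : Finset ι) : ℂ :=
  (A.submatrix (fun i : I => (i : ι)) (fun i : I => (i : ι))).det

lemma jacDet_linear {n : ℕ} (A : Matrix (Fin n) (Fin n) ℂ) (t : ℂ) (x : Fin n → ℂ) :
    jacDet (phiMap A (fun z => t * z)) x = (1 + t • A).det := by
  set L : (Fin n → ℂ) →ₗ[ℂ] (Fin n → ℂ) := LinearMap.id + t • A.mulVecLin with hL
  have hf : phiMap A (fun z => t * z) = L.toContinuousLinearMap := by
    funext y j
    simp [phiMap, hL, Matrix.mulVecLin_apply, smul_eq_mul]
  have hfd : fderiv ℂ (phiMap A (fun z => t * z)) x = L.toContinuousLinearMap := by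
    rw [hf]; exact L.toContinuousLinearMap.fderiv
  rw [jacDet, hfd]
  have : (L.toContinuousLinearMap : (Fin n → ℂ) →ₗ[ℂ] (Fin n → ℂ)) = L := rfl
  rw [this, LinearMap.toMatrix_eq_toMatrix', hL, map_add, _root_.map_smul,
    LinearMap.toMatrix'_id, ← Matrix.toLin'_apply', LinearMap.toMatrix'_toLin']

theorem stmt11 (n : ℕ) (A : Matrix (Fin n) (Fin n) ℂ) (hA : IsUniversal A) :
    IsNilpotent A := by
  -- Step 1: det (1 + t • A) ≠ 0 for all t
  have key : ∀ t : ℂ, (1 + t • A).det ≠ 0 := by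
    intro t
    have hφ : AnalyticOn ℂ (fun z => t * z) Set.univ := by
      apply AnalyticOnNhd.analyticOn
      exact (analyticOnNhd_const).mul analyticOnNhd_id
    obtain ⟨c, hc, hconst⟩ := hA Set.univ (fun z => t * z) isOpen_univ ⟨0, trivial⟩
      isPreconnected_univ hφ ⟨0, fun j => trivial⟩
    have := hconst 0 (fun j => trivial)
    rw [jacDet_linear] at this
    rw [this]; exact hc
  -- Step 2: all eigenvalues zero, hence charpoly = X^n
  have hroots : ∀ μ : ℂ, (A.charpoly).eval μ = 0 → μ = 0 := by
    intro μ hμ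
    by_contra hne
    have heval : (A.charpoly).eval μ = (μ • (1 : Matrix (Fin n) (Fin n) ℂ) - A).det := by
      rw [Matrix.charpoly, ← Polynomial.coe_evalRingHom, RingHom.map_det]
      congr 1
      ext i j
      simp [Matrix.charmatrix, Matrix.one_apply, Polynomial.X]
      by_cases h : i = j <;> simp [h, Matrix.one_apply]
    have h2 : (1 + (-μ⁻¹) • A).det = 0 := by
      have hmat : (1 : Matrix (Fin n) (Fin n) ℂ) + (-μ⁻¹) • A = μ⁻¹ • (μ • 1 - A) := by
        rw [smul_sub, smul_smul, inv_mul_cancel₀ hne, one_smul, neg_smul, ← sub_eq_add_neg]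
      have h3 : (μ • (1 : Matrix (Fin n) (Fin n) ℂ) - A).det = 0 := by rw [← heval]; exact hμ
      rw [hmat, Matrix.det_smul, h3, mul_zero]
    exact key (-μ⁻¹) h2
  -- charpoly = X ^ n
  have hsplit : (A.charpoly).Splits := IsAlgClosed.splits _
  have hmonic : (A.charpoly).Monic := A.charpoly_monic
  have hdeg : (A.charpoly).natDegree = n := by simp [A.charpoly_natDegree_eq_dim]
  have hcp : A.charpoly = Polynomial.X ^ n := by
    have hprod := hsplit.eq_prod_roots_of_monic hmonic
    have hall : ∀ r ∈ (A.charpoly).roots, r = 0 := fun r hr =>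
      hroots r (Polynomial.isRoot_of_mem_roots hr)
    have hcard : Multiset.card (A.charpoly).roots = n := by
      simpa [hdeg] using Polynomial.splits_iff_card_roots.mp hsplit
    have hrep : (A.charpoly).roots = Multiset.replicate n 0 :=
      Multiset.eq_replicate.mpr ⟨hcard, hall⟩
    rw [hprod, hrep]
    simp [Multiset.map_replicate, Multiset.prod_replicate]
  have := Matrix.aeval_self_charpoly A
  rw [hcp] at this
  simpa using ⟨n, by simpa using this⟩
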